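/- For each n ≥ 0, define P_n(x) = Σ_{k=0}^{n} (2k+1) 𝐏_k(x), where 𝐏_k denotes the k-th Legendre polynomial. Then (1/2)·∫_{−1}^{1} P_n(y) P_n(x + y − 1) dy = P_n(x) for all real x. -/

import Mathlib

open MeasureTheory Set

/-- The Legendre polynomial `𝐏ₙ(x) = Σ_{k=0}^n (n choose k)(-n-1 choose k)((1-x)/2)ᵏ`,
using the identity `(-n-1 choose k) = (-1)ᵏ (n+k choose k)`. -/
noncomputable def legendreP (n : ℕ) (x : ℝ) : ℝ :=
  ∑ k ∈ Finset.range (n + 1),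
    (n.choose k : ℝ) * ((-1 : ℝ) ^ k * ((n + k).choose k : ℝ)) * ((1 - x) / 2) ^ k

/- ### Auxiliary material -/

lemma fact_ne (m : ℕ) : ((m.factorial : ℝ)) ≠ 0 := by
  exact_mod_cast m.factorial_pos.ne'

lemma pascal_sum (j : ℕ) (f : ℕ → ℝ) :
    ∑ k ∈ Finset.range (j+2), (-1:ℝ)^k * ((j+1).choose k) * f k
      = ∑ k ∈ Finset.range (j+1), (-1:ℝ)^k * (j.choose k) * (f k - f (k+1)) := by
  have h1 : ∑ k ∈ Finset.range (j+2), (-1:ℝ)^k * ((j+1).choose k) * f k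
      = (∑ k ∈ Finset.range (j+1), (-1:ℝ)^(k+1) * (((j.choose k : ℝ)) + (j.choose (k+1) : ℝ)) * f (k+1)) + f 0 := by
    rw [Finset.sum_range_succ' (fun k => (-1:ℝ)^k * ((j+1).choose k) * f k) (j+1)]
    simp [Nat.choose_succ_succ]
  have h2 : ∑ k ∈ Finset.range (j+2), (-1:ℝ)^k * (j.choose k) * f k
      = (∑ k ∈ Finset.range (j+1), (-1:ℝ)^(k+1) * (j.choose (k+1)) * f (k+1)) + f 0 := by
    rw [Finset.sum_range_succ' (fun k => (-1:ℝ)^k * (j.choose k) * f k) (j+1)]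
    simp
  have h3 : ∑ k ∈ Finset.range (j+2), (-1:ℝ)^k * (j.choose k) * f k
      = ∑ k ∈ Finset.range (j+1), (-1:ℝ)^k * (j.choose k) * f k := by
    rw [Finset.sum_range_succ]
    simp [Nat.choose_eq_zero_of_lt]
  have h4 : ∑ k ∈ Finset.range (j+1), (-1:ℝ)^(k+1) * (((j.choose k : ℝ)) + (j.choose (k+1) : ℝ)) * f (k+1)
      = (∑ k ∈ Finset.range (j+1), (-1:ℝ)^(k+1) * (j.choose k) * f (k+1))
        + ∑ k ∈ Finset.range (j+1), (-1:ℝ)^(k+1) * (j.choose (k+1)) * f (k+1) := by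
    rw [← Finset.sum_add_distrib]
    exact Finset.sum_congr rfl (fun k _ => by ring)
  rw [h1, h4]
  have h5 : ∑ k ∈ Finset.range (j+1), (-1:ℝ)^(k+1) * (j.choose (k+1)) * f (k+1)
      = (∑ k ∈ Finset.range (j+1), (-1:ℝ)^k * (j.choose k) * f k) - f 0 := by
    rw [← h3, h2]; ring
  rw [h5]
  have h6 : (∑ k ∈ Finset.range (j+1), (-1:ℝ)^(k+1) * (j.choose k) * f (k+1))
      + ∑ k ∈ Finset.range (j+1), (-1:ℝ)^k * (j.choose k) * f k
      = ∑ k ∈ Finset.range (j+1), (-1:ℝ)^k * (j.choose k) * (f k - f (k+1)) := by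
    rw [← Finset.sum_add_distrib]
    exact Finset.sum_congr rfl (fun k _ => by ring)
  linarith

lemma beta_sum : ∀ (j r : ℕ),
    ∑ k ∈ Finset.range (j+1), (-1:ℝ)^k * (j.choose k) * (1/((r:ℝ)+k+1))
      = (r.factorial : ℝ) * (j.factorial : ℝ) / ((r+j+1).factorial : ℝ) := by
  intro j
  induction j with
  | zero =>
      intro r
      simp only [zero_add, Finset.range_one, Finset.sum_singleton, Nat.factorial]
      push_cast [Nat.factorial_succ]
      field_simp
      simp
  | succ j ih =>
      intro r
      rw [show j+1+1 = j+2 from rfl, pascal_sum j (fun k => 1/((r:ℝ)+k+1))]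
      have e1 : ∑ k ∈ Finset.range (j+1), (-1:ℝ)^k * (j.choose k) *
            (1/((r:ℝ)+k+1) - 1/((r:ℝ)+(k+1:ℕ)+1))
          = (∑ k ∈ Finset.range (j+1), (-1:ℝ)^k * (j.choose k) * (1/((r:ℝ)+k+1)))
            - ∑ k ∈ Finset.range (j+1), (-1:ℝ)^k * (j.choose k) * (1/(((r+1:ℕ):ℝ)+k+1)) := by
        rw [← Finset.sum_sub_distrib]
        refine Finset.sum_congr rfl (fun k _ => ?_)
        push_cast; ring
      have e2 := ih r
      have e3 := ih (r+1)
      calc ∑ k ∈ Finset.range (j+1), (-1:ℝ)^k * (j.choose k) *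
            ((fun k : ℕ => 1/((r:ℝ)+k+1)) k - (fun k : ℕ => 1/((r:ℝ)+k+1)) (k+1))
          = (∑ k ∈ Finset.range (j+1), (-1:ℝ)^k * (j.choose k) * (1/((r:ℝ)+k+1)))
            - ∑ k ∈ Finset.range (j+1), (-1:ℝ)^k * (j.choose k) * (1/(((r+1:ℕ):ℝ)+k+1)) := by
            rw [← e1]
        _ = (r.factorial : ℝ) * (j.factorial : ℝ) / ((r+j+1).factorial : ℝ)
            - ((r+1).factorial : ℝ) * (j.factorial : ℝ) / ((r+1+j+1).factorial : ℝ) := by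
            rw [e2, e3]
        _ = (r.factorial : ℝ) * ((j+1).factorial : ℝ) / ((r+(j+1)+1).factorial : ℝ) := by
            have h1 : r+1+j+1 = (r+j+1)+1 := by ring
            have h2 : r+(j+1)+1 = (r+j+1)+1 := by ring
            rw [h1, h2, Nat.factorial_succ (r+j+1), Nat.factorial_succ j, Nat.factorial_succ r]
            have := fact_ne (r+j+1)
            field_simp
            push_cast
            ring

open Polynomial in
lemma findiff : ∀ (j : ℕ) (p : Polynomial ℝ), p.degree < j →
    ∑ k ∈ Finset.range (j+1), (-1:ℝ)^k * (j.choose k) * p.eval (k:ℝ) = 0 := by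
  intro j
  induction j with
  | zero =>
      intro p hp
      have : p = 0 := by
        rw [← Polynomial.degree_eq_bot]
        exact Nat.WithBot.lt_zero_iff.mp (by exact_mod_cast hp)
      simp [this]
  | succ j ih =>
      intro p hp
      rw [show j+1+1 = j+2 from rfl, pascal_sum j (fun k => p.eval (k:ℝ))]
      set q : Polynomial ℝ := p - p.comp (X + C 1) with hq
      have hev : ∀ k : ℕ, p.eval (k:ℝ) - p.eval ((k+1:ℕ):ℝ) = q.eval (k:ℝ) := by
        intro k
        simp [hq, Polynomial.eval_comp]
      have key : ∑ k ∈ Finset.range (j+1), (-1:ℝ)^k * (j.choose k) * q.eval (k:ℝ) = 0 := by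
        by_cases hp0 : p = 0
        · simp [hq, hp0]
        · have hnd1 : (X + C (1:ℝ)).natDegree = 1 := Polynomial.natDegree_X_add_C 1
          have hlc1 : (X + C (1:ℝ)).leadingCoeff = 1 := (Polynomial.monic_X_add_C 1)
          have hcomp_lead : (p.comp (X + C 1)).leadingCoeff = p.leadingCoeff := by
            rw [Polynomial.leadingCoeff_comp (by rw [hnd1]; norm_num), hlc1, one_pow, mul_one]
          have hcomp0 : p.comp (X + C (1:ℝ)) ≠ 0 := by
            intro h
            apply hp0
            rw [← Polynomial.leadingCoeff_eq_zero, ← hcomp_lead, h, Polynomial.leadingCoeff_zero]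
          have hcomp_deg : (p.comp (X + C 1)).degree = p.degree := by
            rw [Polynomial.degree_eq_natDegree hcomp0, Polynomial.degree_eq_natDegree hp0,
              Polynomial.natDegree_comp, hnd1, mul_one]
          have hdeg : q.degree < p.degree := by
            rw [hq]
            exact Polynomial.degree_sub_lt hcomp_deg.symm hp0 hcomp_lead.symm
          have hple : p.degree ≤ (j : WithBot ℕ) := by
            have hnd : p.natDegree < j+1 :=
              (Polynomial.natDegree_lt_iff_degree_lt hp0).mpr hp
            rw [Polynomial.degree_eq_natDegree hp0]
            exact_mod_cast Nat.lt_succ_iff.mp hnd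
          exact ih q (lt_of_lt_of_le hdeg hple)
      rw [← key]
      refine Finset.sum_congr rfl (fun k _ => ?_)
      rw [← hev k]

lemma prod_desc (r : ℕ) : ∀ j : ℕ,
    ∏ i ∈ Finset.range j, ((r:ℝ) - i) = (r.choose j : ℝ) * (j.factorial : ℝ) := by
  intro j
  induction j with
  | zero => simp
  | succ j ih =>
      rw [Finset.prod_range_succ, ih, Nat.factorial_succ]
      rcases lt_or_ge j r with h | h
      · have hnat : r.choose (j+1) * (j+1) = r.choose j * (r - j) := Nat.choose_succ_right_eq r j
        have hcast : ((r - j : ℕ) : ℝ) = (r:ℝ) - j := by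
          rw [Nat.cast_sub h.le]
        have : (r.choose (j+1) : ℝ) * ((j:ℝ)+1) = (r.choose j : ℝ) * ((r:ℝ) - j) := by
          rw [← hcast]; exact_mod_cast congrArg (Nat.cast : ℕ → ℝ) hnat
        push_cast
        nlinarith [this]
      · rcases eq_or_lt_of_le h with h' | h'
        · subst h'
          simp [Nat.choose_succ_self]
        · rw [Nat.choose_eq_zero_of_lt h', Nat.choose_eq_zero_of_lt (by omega)]
          simp

lemma prod_asc (k : ℕ) : ∀ j : ℕ,
    ∏ i ∈ Finset.range j, ((k:ℝ) + i + 1) = ((j+k).choose k : ℝ) * (j.factorial : ℝ) := by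
  intro j
  induction j with
  | zero => simp
  | succ j ih =>
      rw [Finset.prod_range_succ, ih, Nat.factorial_succ]
      have hnat : (j+k).choose k * (j+k+1) = (j+1+k).choose k * (j+1) := by
        have h1 : (j+k+1) * (j+k).choose k = (j+k+1).choose (k+1) * (k+1) :=
          Nat.add_one_mul_choose_eq (j+k) k
        have h2 : (j+k+1).choose (k+1) * (k+1) = (j+k+1).choose k * (j+k+1-k) :=
          Nat.choose_succ_right_eq (j+k+1) k
        have h3 : j+k+1-k = j+1 := by omega
        have h4 : j+1+k = j+k+1 := by omega
        rw [h4, mul_comm, h1, h2, h3]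
      have := congrArg (Nat.cast : ℕ → ℝ) hnat
      push_cast at this ⊢
      nlinarith [this]

open Polynomial in
lemma legendre_moment (j r : ℕ) :
    ∑ k ∈ Finset.range (j+1),
        ((-1:ℝ)^k * (j.choose k : ℝ) * (((j+k).choose k : ℝ))) * (1/((r:ℝ)+k+1))
      = (-1:ℝ)^j * (r.choose j : ℝ) * (r.factorial : ℝ) * (j.factorial : ℝ)
          / ((r+j+1).factorial : ℝ) := by
  set N : Polynomial ℝ := ∏ i ∈ Finset.range j, (X + C ((i:ℝ)+1)) with hN
  have hmonic : N.Monic := monic_prod_of_monic _ _ (fun i _ => monic_X_add_C _)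
  have hN0 : N ≠ 0 := hmonic.ne_zero
  have hNdeg : N.natDegree = j := by
    have h := Polynomial.natDegree_prod_of_monic (Finset.range j)
      (fun i => X + C ((i:ℝ)+1)) (fun i _ => monic_X_add_C ((i:ℝ)+1))
    rw [hN, h]
    simp only [Polynomial.natDegree_X_add_C, Finset.sum_const, smul_eq_mul, mul_one,
      Finset.card_range]
  have hNeval : ∀ k : ℕ, N.eval (k:ℝ) = ((j+k).choose k : ℝ) * (j.factorial : ℝ) := by
    intro k
    rw [hN, Polynomial.eval_prod, ← prod_asc k j]
    refine Finset.prod_congr rfl (fun i _ => ?_)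
    simp
    ring
  set α : ℝ := -((r:ℝ)+1) with hα
  set q : Polynomial ℝ := N /ₘ (X - C α) with hq
  have hdiv : ∀ z : ℝ, N.eval z = (z - α) * q.eval z + N.eval α := by
    intro z
    conv_lhs => rw [← Polynomial.modByMonic_add_div N (X - C α)]
    rw [Polynomial.modByMonic_X_sub_C_eq_C_eval]
    simp [hq]
    ring
  have hqdeg : q.degree < (j : WithBot ℕ) := by
    have := Polynomial.degree_divByMonic_lt N (X - C α) hN0 (by
      rw [Polynomial.degree_X_sub_C]; norm_num)
    rwa [Polynomial.degree_eq_natDegree hN0, hNdeg] at this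
  have hNα : N.eval α = (-1:ℝ)^j * (r.choose j : ℝ) * (j.factorial : ℝ) := by
    rw [hN, Polynomial.eval_prod]
    have : ∀ i ∈ Finset.range j, (X + C ((i:ℝ)+1)).eval α = (-1) * ((r:ℝ) - i) := by
      intro i _
      simp [hα]; ring
    rw [Finset.prod_congr rfl this, Finset.prod_mul_distrib, Finset.prod_const,
      Finset.card_range, prod_desc r j]
    ring
  have hterm : ∀ k ∈ Finset.range (j+1),
      ((-1:ℝ)^k * (j.choose k : ℝ) * (((j+k).choose k : ℝ))) * (1/((r:ℝ)+k+1))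
      = ((-1:ℝ)^k * (j.choose k) * q.eval (k:ℝ)) * ((j.factorial : ℝ))⁻¹
        + (N.eval α / (j.factorial : ℝ)) * ((-1:ℝ)^k * (j.choose k) * (1/((r:ℝ)+k+1))) := by
    intro k _
    have h2 : N.eval (k:ℝ) = ((r:ℝ) + k + 1) * q.eval (k:ℝ) + N.eval α := by
      rw [hdiv ((k:ℕ):ℝ), hα]; ring
    have h1 : ((j+k).choose k : ℝ) = N.eval (k:ℝ) / (j.factorial : ℝ) := by
      rw [hNeval]; field_simp
    have hne : (r:ℝ)+(k:ℝ)+1 ≠ 0 := by positivity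
    rw [h1, h2]
    field_simp
  rw [Finset.sum_congr rfl hterm, Finset.sum_add_distrib, ← Finset.sum_mul, ← Finset.mul_sum,
    findiff j q hqdeg, beta_sum j r, hNα]
  field_simp
  ring

lemma mu_sum (n r : ℕ) (hrn : r ≤ n) :
    ∑ j ∈ Finset.range (n+1),
        (2*(j:ℝ)+1) * ((-1:ℝ)^j * (r.choose j : ℝ) * (r.factorial : ℝ) * (j.factorial : ℝ)
          / ((r+j+1).factorial : ℝ))
      = if r = 0 then 1 else 0 := by
  rcases Nat.eq_zero_or_pos r with hr | hr
  · subst hr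
    simp only [if_pos rfl]
    rw [Finset.sum_eq_single 0]
    · norm_num [Nat.factorial]
    · intro j _ hj
      rw [Nat.choose_eq_zero_of_lt (Nat.pos_of_ne_zero hj)]
      simp
    · intro h; exact absurd (Finset.mem_range.mpr (Nat.succ_pos n)) h
  · rw [if_neg hr.ne']
    set W : ℕ → ℝ := fun j => (-1:ℝ)^j * (j:ℝ) * (r.choose j : ℝ) * (r.factorial : ℝ)
        * (j.factorial : ℝ) / ((r+j).factorial : ℝ) with hW
    have key : ∀ j : ℕ, (2*(j:ℝ)+1) * ((-1:ℝ)^j * (r.choose j : ℝ) * (r.factorial : ℝ)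
          * (j.factorial : ℝ) / ((r+j+1).factorial : ℝ))
        = (W j - W (j+1)) / r := by
      intro j
      rcases le_or_gt j r with hjr | hjr
      · have hnat : r.choose (j+1) * (j+1) = r.choose j * (r - j) := Nat.choose_succ_right_eq r j
        have hcast : ((r - j : ℕ) : ℝ) = (r:ℝ) - j := Nat.cast_sub hjr
        have hch : (r.choose (j+1) : ℝ) * ((j:ℝ)+1) = (r.choose j : ℝ) * ((r:ℝ) - (j:ℝ)) := by
          rw [← hcast]; exact_mod_cast congrArg (Nat.cast : ℕ → ℝ) hnat
        have h2 : ((j:ℝ)+1) ≠ 0 := by positivity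
        have hrj : (r.choose (j+1):ℝ) = (r.choose j : ℝ) * ((r:ℝ)-(j:ℝ)) / ((j:ℝ)+1) := by
          field_simp
          linarith [hch]
        rw [hW]
        simp only [hrj, Nat.factorial_succ j,
          show r+(j+1) = (r+j)+1 from by ring, show r+j+1 = (r+j)+1 from rfl,
          Nat.factorial_succ (r+j)]
        have h1 := fact_ne (r+j)
        have h3 : (r:ℝ) ≠ 0 := by positivity
        have h4 : ((r:ℝ)+(j:ℝ)+1) ≠ 0 := by positivity
        push_cast
        field_simp
        ring
      · have hz1 : r.choose j = 0 := Nat.choose_eq_zero_of_lt hjr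
        have hz2 : r.choose (j+1) = 0 := Nat.choose_eq_zero_of_lt (by omega)
        simp [hW, hz1, hz2]
    rw [Finset.sum_congr rfl (fun j _ => key j), ← Finset.sum_div,
      Finset.sum_range_sub' W (n+1)]
    have hW0 : W 0 = 0 := by simp [hW]
    have hWn : W (n+1) = 0 := by
      rw [hW]; simp [Nat.choose_eq_zero_of_lt (by omega : r < n+1)]
    rw [hW0, hWn]
    simp

noncomputable def legCoeff (j k : ℕ) : ℝ := (-1:ℝ)^k * (j.choose k : ℝ) * (((j+k).choose k : ℝ))

noncomputable def kerCoeff (n k : ℕ) : ℝ := ∑ j ∈ Finset.range (n+1), (2*(j:ℝ)+1) * legCoeff j k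

lemma legCoeff_zero {j k : ℕ} (h : j < k) : legCoeff j k = 0 := by
  simp [legCoeff, Nat.choose_eq_zero_of_lt h]

lemma kerCoeff_moment (n r : ℕ) (hrn : r ≤ n) :
    ∑ k ∈ Finset.range (n+1), kerCoeff n k * (1/((r:ℝ)+k+1))
      = if r = 0 then 1 else 0 := by
  have h1 : ∑ k ∈ Finset.range (n+1), kerCoeff n k * (1/((r:ℝ)+k+1))
      = ∑ j ∈ Finset.range (n+1), (2*(j:ℝ)+1) *
          ∑ k ∈ Finset.range (n+1), legCoeff j k * (1/((r:ℝ)+k+1)) := by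
    simp only [kerCoeff, Finset.sum_mul, Finset.mul_sum]
    rw [Finset.sum_comm]
    exact Finset.sum_congr rfl (fun j _ => Finset.sum_congr rfl (fun k _ => by ring))
  rw [h1]
  have h2 : ∀ j ∈ Finset.range (n+1),
      (2*(j:ℝ)+1) * ∑ k ∈ Finset.range (n+1), legCoeff j k * (1/((r:ℝ)+k+1))
      = (2*(j:ℝ)+1) * ((-1:ℝ)^j * (r.choose j : ℝ) * (r.factorial : ℝ) * (j.factorial : ℝ)
          / ((r+j+1).factorial : ℝ)) := by
    intro j hj
    have hsub : Finset.range (j+1) ⊆ Finset.range (n+1) :=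
      Finset.range_subset_range.mpr (by exact Nat.succ_le_succ (Nat.lt_succ_iff.mp (Finset.mem_range.mp hj)))
    have hzero : ∀ k ∈ Finset.range (n+1), k ∉ Finset.range (j+1) →
        legCoeff j k * (1/((r:ℝ)+k+1)) = 0 := by
      intro k _ hk
      have hjk : j < k := by
        simp only [Finset.mem_range, not_lt] at hk
        omega
      simp [legCoeff_zero hjk]
    have htrunc : ∑ k ∈ Finset.range (n+1), legCoeff j k * (1/((r:ℝ)+k+1))
        = ∑ k ∈ Finset.range (j+1), legCoeff j k * (1/((r:ℝ)+k+1)) :=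
      (Finset.sum_subset hsub hzero).symm
    rw [htrunc]
    have : ∑ k ∈ Finset.range (j+1), legCoeff j k * (1/((r:ℝ)+k+1))
        = ∑ k ∈ Finset.range (j+1),
          ((-1:ℝ)^k * (j.choose k : ℝ) * (((j+k).choose k : ℝ))) * (1/((r:ℝ)+k+1)) :=
      Finset.sum_congr rfl (fun k _ => by simp [legCoeff])
    rw [this, legendre_moment j r]
  rw [Finset.sum_congr rfl h2, mu_sum n r hrn]

lemma P_rep (n : ℕ) (x : ℝ) :
    ∑ k ∈ Finset.range (n + 1), (2 * (k : ℝ) + 1) * legendreP k x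
      = ∑ k ∈ Finset.range (n+1), kerCoeff n k * ((1-x)/2)^k := by
  have h1 : ∀ j ∈ Finset.range (n+1), (2 * (j : ℝ) + 1) * legendreP j x
      = ∑ k ∈ Finset.range (n+1), (2*(j:ℝ)+1) * legCoeff j k * ((1-x)/2)^k := by
    intro j hj
    have hsub : Finset.range (j+1) ⊆ Finset.range (n+1) :=
      Finset.range_subset_range.mpr (by exact Nat.succ_le_succ (Nat.lt_succ_iff.mp (Finset.mem_range.mp hj)))
    have hzero : ∀ k ∈ Finset.range (n+1), k ∉ Finset.range (j+1) →
        (2*(j:ℝ)+1) * legCoeff j k * ((1-x)/2)^k = 0 := by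
      intro k _ hk
      have hjk : j < k := by
        simp only [Finset.mem_range, not_lt] at hk
        omega
      simp [legCoeff_zero hjk]
    rw [← Finset.sum_subset hsub hzero, legendreP, Finset.mul_sum]
    exact Finset.sum_congr rfl (fun k _ => by simp [legCoeff]; ring)
  rw [Finset.sum_congr rfl h1, Finset.sum_comm]
  refine Finset.sum_congr rfl (fun k _ => ?_)
  rw [kerCoeff, Finset.sum_mul]

lemma cont_pow (p : ℕ) : Continuous (fun y : ℝ => ((1-y)/2)^p) := by
  fun_prop

lemma integrableOn_pow (p : ℕ) (c : ℝ) :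
    IntegrableOn (fun y : ℝ => c * ((1-y)/2)^p) (Ioo (-1:ℝ) 1) := by
  have : IntegrableOn (fun y : ℝ => c * ((1-y)/2)^p) (Icc (-1:ℝ) 1) :=
    (Continuous.integrableOn_Icc (by fun_prop))
  exact this.mono_set Ioo_subset_Icc_self

lemma integral_pow_Ioo (p : ℕ) :
    ∫ y in Ioo (-1:ℝ) 1, ((1-y)/2)^p = 2/((p:ℝ)+1) := by
  have h0 : (∫ y in Ioo (-1:ℝ) 1, ((1-y)/2)^p) = ∫ y in (-1:ℝ)..1, ((1-y)/2)^p := by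
    rw [intervalIntegral.integral_of_le (by norm_num : (-1:ℝ) ≤ 1),
      MeasureTheory.integral_Ioc_eq_integral_Ioo]
  rw [h0]
  have hp1 : ((p:ℝ)+1) ≠ 0 := by positivity
  have hderiv : ∀ y ∈ Set.uIcc (-1:ℝ) 1,
      HasDerivAt (fun y : ℝ => -(2/((p:ℝ)+1)) * ((1-y)/2)^(p+1)) (((1-y)/2)^p) y := by
    intro y _
    have h1 : HasDerivAt (fun y : ℝ => (1-y)/2) (-(1/2)) y := by
      have h := ((hasDerivAt_id' y).const_sub 1).div_const 2
      rw [neg_div] at h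
      exact h
    have h2 := (h1.pow (p+1)).const_mul (-(2/((p:ℝ)+1)))
    refine h2.congr_deriv ?_
    simp only [Nat.add_sub_cancel]
    push_cast
    field_simp
  have hcont : IntervalIntegrable (fun y : ℝ => ((1-y)/2)^p) volume (-1) 1 :=
    (cont_pow p).intervalIntegrable _ _
  rw [intervalIntegral.integral_eq_sub_of_hasDerivAt hderiv hcont]
  norm_num

/-- Legendre example of Dominici (`ω = 1/2` on `(-1,1)`, `ζ = 1`, `τ = 1`, `σ = 0`):
the kernel polynomials `Pₙ(x) = Σ_{k=0}^n (2k+1) 𝐏ₖ(x)` satisfy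
`(1/2)·∫_{-1}^1 Pₙ(y) Pₙ(x+y-1) dy = Pₙ(x)`. -/
theorem legendre_kernel_example (P : ℕ → ℝ → ℝ)
    (hP : ∀ n x, P n x = ∑ k ∈ Finset.range (n + 1), (2 * (k : ℝ) + 1) * legendreP k x) :
    ∀ (n : ℕ) (x : ℝ),
      (1 / 2) * (∫ y in Ioo (-1 : ℝ) 1, P n y * P n (x + y - 1)) = P n x := by
  intro n x
  set u : ℝ := (1-x)/2 with hu
  have hPy : ∀ y : ℝ, P n y = ∑ k ∈ Finset.range (n+1), kerCoeff n k * ((1-y)/2)^k := by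
    intro y
    rw [hP n y, P_rep]
  have hshift : ∀ y : ℝ, P n (x+y-1) = ∑ m ∈ Finset.range (n+1), kerCoeff n m *
      ∑ i ∈ Finset.range (m+1), u^i * ((1-y)/2)^(m-i) * (m.choose i : ℝ) := by
    intro y
    rw [hPy (x+y-1)]
    refine Finset.sum_congr rfl (fun m _ => ?_)
    have h : (1-(x+y-1))/2 = u + (1-y)/2 := by rw [hu]; ring
    rw [h, add_pow]
  have hint : ∀ y : ℝ, P n y * P n (x+y-1)
      = ∑ k ∈ Finset.range (n+1), ∑ m ∈ Finset.range (n+1), ∑ i ∈ Finset.range (m+1),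
          (kerCoeff n k * kerCoeff n m * (m.choose i : ℝ) * u^i) * ((1-y)/2)^(k+(m-i)) := by
    intro y
    rw [hPy y, hshift y, Finset.sum_mul_sum]
    refine Finset.sum_congr rfl (fun k _ => ?_)
    refine Finset.sum_congr rfl (fun m _ => ?_)
    rw [show (kerCoeff n k * ((1-y)/2)^k) * (kerCoeff n m *
        ∑ i ∈ Finset.range (m+1), u^i * ((1-y)/2)^(m-i) * (m.choose i : ℝ))
      = ∑ i ∈ Finset.range (m+1), (kerCoeff n k * ((1-y)/2)^k) * (kerCoeff n m *
          (u^i * ((1-y)/2)^(m-i) * (m.choose i : ℝ))) from by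
        rw [← Finset.mul_sum, ← Finset.mul_sum]]
    refine Finset.sum_congr rfl (fun i _ => ?_)
    rw [pow_add]
    ring
  have keyint : (∫ y in Ioo (-1:ℝ) 1, P n y * P n (x+y-1))
      = ∑ k ∈ Finset.range (n+1), ∑ m ∈ Finset.range (n+1), ∑ i ∈ Finset.range (m+1),
          (kerCoeff n k * kerCoeff n m * (m.choose i : ℝ) * u^i) * (2/(((k+(m-i):ℕ):ℝ)+1)) := by
    rw [MeasureTheory.setIntegral_congr_fun measurableSet_Ioo (fun y _ => hint y)]
    rw [MeasureTheory.integral_finset_sum _ (fun k _ => ?_)]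
    · refine Finset.sum_congr rfl (fun k _ => ?_)
      rw [MeasureTheory.integral_finset_sum _ (fun m _ => ?_)]
      · refine Finset.sum_congr rfl (fun m _ => ?_)
        rw [MeasureTheory.integral_finset_sum _ (fun i _ => ?_)]
        · refine Finset.sum_congr rfl (fun i _ => ?_)
          rw [MeasureTheory.integral_const_mul, integral_pow_Ioo]
        · exact integrableOn_pow _ _
      · exact integrable_finset_sum _ (fun i _ => integrableOn_pow _ _)
    · exact integrable_finset_sum _ (fun m _ =>
        integrable_finset_sum _ (fun i _ => integrableOn_pow _ _))
  rw [keyint, hP n x, P_rep n x, ← hu]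
  have step1 : (1/2 : ℝ) * ∑ k ∈ Finset.range (n+1), ∑ m ∈ Finset.range (n+1),
        ∑ i ∈ Finset.range (m+1),
          (kerCoeff n k * kerCoeff n m * (m.choose i : ℝ) * u^i) * (2/(((k+(m-i):ℕ):ℝ)+1))
      = ∑ m ∈ Finset.range (n+1), ∑ i ∈ Finset.range (m+1),
          (kerCoeff n m * (m.choose i : ℝ) * u^i) *
            ∑ k ∈ Finset.range (n+1), kerCoeff n k * (1/(((m-i:ℕ):ℝ)+(k:ℝ)+1)) := by
    simp only [Finset.mul_sum]
    rw [Finset.sum_comm]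
    refine Finset.sum_congr rfl (fun m _ => ?_)
    rw [Finset.sum_comm]
    refine Finset.sum_congr rfl (fun i _ => ?_)
    refine Finset.sum_congr rfl (fun k _ => ?_)
    push_cast
    ring
  rw [step1]
  refine Finset.sum_congr rfl (fun m hm => ?_)
  have hmn : m ≤ n := Nat.lt_succ_iff.mp (Finset.mem_range.mp hm)
  have hmom : ∀ i ∈ Finset.range (m+1),
      (kerCoeff n m * (m.choose i : ℝ) * u^i) *
          ∑ k ∈ Finset.range (n+1), kerCoeff n k * (1/(((m-i:ℕ):ℝ)+(k:ℝ)+1))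
      = (kerCoeff n m * (m.choose i : ℝ) * u^i) * (if m - i = 0 then 1 else 0) := by
    intro i _
    rw [kerCoeff_moment n (m-i) (le_trans (Nat.sub_le m i) hmn)]
  rw [Finset.sum_congr rfl hmom,
    Finset.sum_eq_single_of_mem m (Finset.self_mem_range_succ m)]
  · simp
  · intro i hi him
    have hne : m - i ≠ 0 := by
      have := Finset.mem_range.mp hi
      omega
    simp [hne]
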